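/- The wreath product Z wr Z (integers wreath integers) is not self-similar: for every subgroup H ≤ Z wr Z of finite index and every homomorphism f : H → Z wr Z, there exists a nontrivial subgroup K ≤ H that is normal in Z wr Z and satisfies f(K) ≤ K. -/

import Mathlib

def shiftEquiv {B X : Type*} [AddCommGroup B] [AddCommGroup X] (x : X) :
    (X →₀ B) ≃+ (X →₀ B) := Finsupp.domCongr (Equiv.addRight x)

noncomputable def shiftHom (B X : Type*) [AddCommGroup B] [AddCommGroup X] :
    Multiplicative X →* Multiplicative (AddAut (X →₀ B)) :=
  MonoidHom.mk' (fun x => Multiplicative.ofAdd (shiftEquiv x.toAdd)) (by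
    intro a b
    show shiftEquiv _ = shiftEquiv _ + shiftEquiv _
    apply AddEquiv.ext
    intro f
    ext y
    simp [shiftEquiv, Finsupp.domCongr, Equiv.Perm.mul_def, AddAut.add_apply, sub_eq_add_neg]
    congr 1
    abel)

noncomputable def wreathAct (B X : Type*) [AddCommGroup B] [AddCommGroup X] :
    Multiplicative X →* MulAut (Multiplicative (X →₀ B)) :=
  { toFun := fun x => AddEquiv.toMultiplicative (shiftHom B X x).toAdd
    map_one' := by ext f; simp
    map_mul' := by intro a b; ext f; simp }

abbrev Wreath (B X : Type*) [AddCommGroup B] [AddCommGroup X] :=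
  SemidirectProduct (Multiplicative (X →₀ B)) (Multiplicative X) (wreathAct B X)

/- ===================== auxiliary development ===================== -/

open SemidirectProduct Multiplicative

namespace Stmt11

abbrev RR : Type := ℤ →₀ ℤ
abbrev GG : Type := Wreath ℤ ℤ

noncomputable abbrev ι : Multiplicative RR →* GG := SemidirectProduct.inl

/- ------ shift lemmas ------ -/

theorem shiftEquiv_apply {B : Type*} [AddCommGroup B] (t : ℤ) (v : ℤ →₀ B) (y : ℤ) :
    shiftEquiv t v y = v (y - t) := by
  simp [shiftEquiv, Finsupp.domCongr_apply, sub_eq_add_neg]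

theorem shiftEquiv_comp {B : Type*} [AddCommGroup B] (a b : ℤ) (v : ℤ →₀ B) :
    shiftEquiv a (shiftEquiv b v) = shiftEquiv (a + b) v := by
  ext y; simp only [shiftEquiv_apply]; ring_nf

theorem shiftEquiv_zero {B : Type*} [AddCommGroup B] (v : ℤ →₀ B) :
    shiftEquiv (0 : ℤ) v = v := by
  ext y; simp [shiftEquiv_apply]

theorem shiftEquiv_single (t j : ℤ) (n : ℤ) :
    shiftEquiv t (Finsupp.single j n) = Finsupp.single (j + t) n := by
  ext y
  simp only [shiftEquiv_apply, Finsupp.single_apply]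
  by_cases h : j = y - t
  · simp [h, (by omega : j + t = y)]
  · rw [if_neg h, if_neg (by omega)]

/-- a finitely supported function invariant under a nonzero shift is zero -/
theorem shiftEquiv_eq_self {B : Type*} [AddCommGroup B] {t : ℤ} {v : ℤ →₀ B}
    (h : shiftEquiv t v = v) (ht : t ≠ 0) : v = 0 := by
  by_contra hv
  have hs : v.support.Nonempty := Finsupp.support_nonempty_iff.mpr hv
  have hmax := v.support.max'_mem hs
  have hmin := v.support.min'_mem hs
  set M := v.support.max' hs with hM
  set m := v.support.min' hs with hm
  have h1 : v (M + t) = v M := by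
    have := congrArg (fun w => w (M + t)) h
    simpa [shiftEquiv_apply] using this.symm
  have h2 : v (m + t) = v m := by
    have := congrArg (fun w => w (m + t)) h
    simpa [shiftEquiv_apply] using this.symm
  have hM' : M + t ∈ v.support := by
    rw [Finsupp.mem_support_iff, h1]; exact Finsupp.mem_support_iff.mp hmax
  have hm' : m + t ∈ v.support := by
    rw [Finsupp.mem_support_iff, h2]; exact Finsupp.mem_support_iff.mp hmin
  have := v.support.le_max' _ hM'
  have := v.support.min'_le _ hm'
  omega

/- ------ group lemmas ------ -/

theorem wreathAct_apply (z : Multiplicative ℤ) (u : Multiplicative RR) :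
    (wreathAct ℤ ℤ) z u = ofAdd (shiftEquiv (toAdd z) (toAdd u)) := rfl

theorem conj_inl' (g : GG) (u : Multiplicative RR) :
    g * ι u * g⁻¹ = ι ((wreathAct ℤ ℤ) (rightHom g) u) := by
  apply SemidirectProduct.ext
  · simp only [mul_left, inv_left, inv_right, mul_right, left_inl, right_inl, mul_one,
      rightHom_eq_right, map_mul, map_inv]
    rw [MulAut.inv_def, MulEquiv.apply_symm_apply]
    exact mul_inv_cancel_comm g.left _
  · simp [mul_right, inv_right]

theorem conj_inl (g : GG) (u : Multiplicative RR) :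
    g * ι u * g⁻¹ = ι (ofAdd (shiftEquiv (toAdd (rightHom g)) (toAdd u))) :=
  conj_inl' g u

theorem eq_inl_left {g : GG} (h : rightHom g = 1) : ι g.left = g := by
  rw [rightHom_eq_right] at h
  apply SemidirectProduct.ext
  · simp [left_inl]
  · simp [right_inl, h]

theorem inl_comm {y z : GG} (hy : rightHom y = 1) (hz : rightHom z = 1) :
    y * z = z * y := by
  rw [← eq_inl_left hy, ← eq_inl_left hz, ← map_mul, ← map_mul, mul_comm]

/- ------ the K-builder ------ -/

noncomputable def mkK (W : AddSubgroup RR) : Subgroup GG :=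
  Subgroup.map ι (AddSubgroup.toSubgroup W)

theorem mem_toSubgroup {W : AddSubgroup RR} {x : Multiplicative RR} :
    x ∈ AddSubgroup.toSubgroup W ↔ toAdd x ∈ W := Iff.rfl

theorem mem_mkK {W : AddSubgroup RR} {g : GG} :
    g ∈ mkK W ↔ ∃ w ∈ W, g = ι (ofAdd w) := by
  constructor
  · rintro ⟨x, hx, rfl⟩
    exact ⟨toAdd x, mem_toSubgroup.mp hx, rfl⟩
  · rintro ⟨w, hw, rfl⟩
    exact ⟨ofAdd w, mem_toSubgroup.mpr hw, rfl⟩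

theorem build (H : Subgroup GG) (f : H →* GG) (W : AddSubgroup RR)
    (hstab : ∀ (t : ℤ) w, w ∈ W → shiftEquiv t w ∈ W)
    (hne : ∃ w ∈ W, w ≠ (0 : RR))
    (hle : ∀ w ∈ W, ι (ofAdd w) ∈ H)
    (hf : ∀ w (hw : w ∈ W), f ⟨ι (ofAdd w), hle w hw⟩ ∈ mkK W) :
    ∃ K : Subgroup GG, K ≠ ⊥ ∧ K.Normal ∧ ∃ hK : K ≤ H,
      ∀ k (hk : k ∈ K), f ⟨k, hK hk⟩ ∈ K := by
  have hKH : mkK W ≤ H := by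
    rintro k hk
    obtain ⟨w, hw, rfl⟩ := mem_mkK.mp hk
    exact hle w hw
  refine ⟨mkK W, ?_, ?_, hKH, ?_⟩
  · obtain ⟨w, hw, hw0⟩ := hne
    intro hbot
    have : ι (ofAdd w) ∈ mkK W := mem_mkK.mpr ⟨w, hw, rfl⟩
    rw [hbot, Subgroup.mem_bot] at this
    have : ofAdd w = 1 := inl_injective this
    exact hw0 (by simpa using congrArg toAdd this)
  · constructor
    intro k hk g
    obtain ⟨w, hw, rfl⟩ := mem_mkK.mp hk
    rw [conj_inl]
    exact mem_mkK.mpr ⟨_, hstab _ _ hw, rfl⟩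
  · intro k hk
    obtain ⟨w, hw, rfl⟩ := mem_mkK.mp hk
    exact hf w hw

theorem exists_h0 (H : Subgroup GG) (hH : H.FiniteIndex) :
    ∃ h₀, h₀ ∈ H ∧ ∃ m : ℕ, m ≠ 0 ∧ rightHom h₀ = ofAdd (m : ℤ) := by
  haveI := hH
  by_contra hcon
  push_neg at hcon
  have hker : ∀ h ∈ H, rightHom h = (1 : Multiplicative ℤ) := by
    intro h hh
    by_contra hne
    have hz0 : toAdd (rightHom h) ≠ 0 := by
      intro h0
      exact hne (by rw [← ofAdd_toAdd (rightHom h), h0, ofAdd_zero])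
    rcases lt_or_gt_of_ne hz0 with hlt | hgt
    · refine hcon h⁻¹ (inv_mem hh) (-(toAdd (rightHom h))).toNat (by omega) ?_
      have hcast : (((-(toAdd (rightHom h))).toNat : ℕ) : ℤ) = -(toAdd (rightHom h)) := by omega
      rw [hcast, map_inv, ← ofAdd_toAdd (rightHom h), ← ofAdd_neg]
      simp
    · refine hcon h hh (toAdd (rightHom h)).toNat (by omega) ?_
      have hcast : (((toAdd (rightHom h)).toNat : ℕ) : ℤ) = toAdd (rightHom h) := by omega
      rw [hcast, ← ofAdd_toAdd (rightHom h)]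
      simp
  have hinj : Function.Injective (fun z : Multiplicative ℤ =>
      (QuotientGroup.mk (SemidirectProduct.inr z) : GG ⧸ H)) := by
    intro z z' hzz
    have := QuotientGroup.leftRel_apply.mp (Quotient.eq''.mp hzz)
    have h2 := hker _ this
    rw [map_mul, map_inv, rightHom_inr, rightHom_inr] at h2
    exact inv_mul_eq_one.mp h2
  haveI : Finite (GG ⧸ H) := Subgroup.finite_quotient_of_finiteIndex (H := H)
  haveI := Finite.of_injective _ hinj
  exact not_finite (Multiplicative ℤ)

noncomputable def BsOf (H : Subgroup GG) : AddSubgroup RR where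
  carrier := {w | ι (ofAdd w) ∈ H}
  zero_mem' := by simpa using H.one_mem
  add_mem' := by
    intro a b ha hb
    simpa [ofAdd_add] using H.mul_mem ha hb
  neg_mem' := by
    intro a ha
    simpa [ofAdd_neg] using H.inv_mem ha

theorem mem_BsOf {H : Subgroup GG} {w : RR} : w ∈ BsOf H ↔ ι (ofAdd w) ∈ H := Iff.rfl

theorem finite_BsOf (H : Subgroup GG) (hH : H.FiniteIndex) : Finite (RR ⧸ BsOf H) := by
  haveI := hH
  haveI : Finite (GG ⧸ H) := Subgroup.finite_quotient_of_finiteIndex (H := H)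
  have hresp : ∀ a b : RR, (QuotientAddGroup.leftRel (BsOf H)) a b →
      (QuotientGroup.leftRel H) (ι (ofAdd a)) (ι (ofAdd b)) := by
    intro a b hab
    rw [QuotientAddGroup.leftRel_apply] at hab
    rw [QuotientGroup.leftRel_apply]
    have : ι (ofAdd (-a + b)) = (ι (ofAdd a))⁻¹ * ι (ofAdd b) := by
      rw [ofAdd_add, map_mul, ofAdd_neg, map_inv]
    rw [← this]
    exact hab
  have hinj : Function.Injective
      (Quotient.map' (fun w : RR => ι (ofAdd w)) hresp :
        RR ⧸ BsOf H → GG ⧸ H) := by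
    intro x y
    refine Quotient.inductionOn₂' x y ?_
    intro a b hab
    have := Quotient.eq''.mp hab
    rw [QuotientGroup.leftRel_apply] at this
    have : ι (ofAdd (-a + b)) ∈ H := by
      rw [ofAdd_add, map_mul, ofAdd_neg, map_inv]; exact this
    exact Quotient.sound' (QuotientAddGroup.leftRel_apply.mpr this)
  exact Finite.of_injective _ hinj

theorem nsmul_apply' {M : Type*} [AddCommMonoid M] (n : ℕ) (r : ℤ →₀ M) (k : ℤ) :
    (n • r) k = n • (r k) := by
  induction n with
  | zero => simp
  | succ p ih => rw [succ_nsmul, succ_nsmul, Finsupp.add_apply, ih]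

/-- Step 1 of the integrality lemma: mod-ℓ vanishing. -/
theorem step1 (Q : RR → RR) (hadd : ∀ a b, Q (a + b) = Q a + Q b)
    (ms s : ℤ) (hs : s ≠ 0)
    (htw : ∀ a, Q (shiftEquiv ms a) = shiftEquiv s (Q a))
    (Bs : AddSubgroup RR) (hfin : Finite (RR ⧸ Bs))
    (ℓ : ℕ) (hℓ : ∀ b ∈ Bs, ∀ k, (ℓ : ℤ) ∣ Q b k) :
    ∀ (a : RR) (k : ℤ), (ℓ : ℤ) ∣ Q a k := by
  classical
  haveI := hfin
  set Qb : RR →+ (ℤ →₀ ZMod ℓ) := AddMonoidHom.mk'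
    (fun a => (Q a).mapRange (fun n : ℤ => (n : ZMod ℓ)) (by simp)) (by
      intro a b
      ext k
      show (((Q (a + b)) k : ℤ) : ZMod ℓ) = _
      rw [hadd, Finsupp.add_apply, Int.cast_add, Finsupp.add_apply,
        Finsupp.mapRange_apply, Finsupp.mapRange_apply]) with hQbdef
  have hQbapply : ∀ (a : RR) (k : ℤ), Qb a k = ((Q a k : ℤ) : ZMod ℓ) := by
    intro a k
    show ((Q a).mapRange (fun n : ℤ => (n : ZMod ℓ)) (by simp)) k = _
    rw [Finsupp.mapRange_apply]
  have hvan : ∀ b ∈ Bs, Qb b = 0 := by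
    intro b hb
    ext k
    rw [hQbapply, Finsupp.coe_zero, Pi.zero_apply]
    exact (ZMod.intCast_zmod_eq_zero_iff_dvd _ _).mpr (hℓ b hb k)
  have hfinrange : (Set.range (fun a : RR => Qb a)).Finite := by
    have hsub : Set.range (fun a : RR => Qb a) ⊆
        Set.range (QuotientAddGroup.lift Bs Qb (fun b hb => AddMonoidHom.mem_ker.mpr (hvan b hb))) := by
      rintro x ⟨a, rfl⟩
      exact ⟨QuotientAddGroup.mk a, by rw [QuotientAddGroup.lift_mk]⟩
    exact Set.Finite.subset (Set.finite_range _) hsub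
  have htwk : ∀ (n : ℕ) (a : RR),
      Q (shiftEquiv ((n : ℤ) * ms) a) = shiftEquiv ((n : ℤ) * s) (Q a) := by
    intro n
    induction n with
    | zero => intro a; simp only [Nat.cast_zero, zero_mul, shiftEquiv_zero]
    | succ p ih =>
        intro a
        have e1 : (((p + 1 : ℕ) : ℤ) * ms) = ms + (p : ℤ) * ms := by push_cast; ring
        have e2 : (((p + 1 : ℕ) : ℤ) * s) = s + (p : ℤ) * s := by push_cast; ring
        rw [e1, e2, ← shiftEquiv_comp, ← shiftEquiv_comp, htw, ih]
  have hQbshift : ∀ (n : ℕ) (a : RR),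
      Qb (shiftEquiv ((n : ℤ) * ms) a) = shiftEquiv ((n : ℤ) * s) (Qb a) := by
    intro n a
    ext k
    rw [hQbapply, htwk, shiftEquiv_apply, shiftEquiv_apply, hQbapply]
  have hQb0 : ∀ a, Qb a = 0 := by
    intro a
    by_contra hne
    have hinj : Function.Injective (fun n : ℕ => shiftEquiv ((n : ℤ) * s) (Qb a)) := by
      intro k1 k2 h12
      by_contra hkne
      simp only at h12
      have h13 := congrArg (fun w => shiftEquiv (-((k2 : ℤ) * s)) w) h12
      rw [shiftEquiv_comp, shiftEquiv_comp] at h13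
      have e3 : (-((k2 : ℤ) * s) + (k2 : ℤ) * s) = 0 := by ring
      rw [e3, shiftEquiv_zero] at h13
      have hzne : (-((k2 : ℤ) * s) + (k1 : ℤ) * s) ≠ 0 := by
        intro h
        apply hkne
        have : ((k1 : ℤ) - k2) * s = 0 := by linarith [h]
        rcases mul_eq_zero.mp this with h' | h'
        · omega
        · exact absurd h' hs
      exact hne (shiftEquiv_eq_self h13 hzne)
    have hmem : ∀ n : ℕ, shiftEquiv ((n : ℤ) * s) (Qb a) ∈
        Set.range (fun a : RR => Qb a) := by
      intro n
      exact ⟨shiftEquiv ((n : ℤ) * ms) a, hQbshift n a⟩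
    exact Set.not_infinite.mpr hfinrange (Set.infinite_of_injective_forall_mem hinj hmem)
  intro a k
  have h1 := congrArg (fun w : (ℤ →₀ ZMod ℓ) => w k) (hQb0 a)
  simp only [Finsupp.coe_zero, Pi.zero_apply] at h1
  rw [hQbapply] at h1
  exact (ZMod.intCast_zmod_eq_zero_iff_dvd _ _).mp h1

/-- The key integrality lemma. -/
theorem keyB (d : ℕ) (hd0 : d ≠ 0) : ∀ (Q : RR → RR), (∀ a b, Q (a + b) = Q a + Q b) →
    ∀ (ms s : ℤ), s ≠ 0 → (∀ a, Q (shiftEquiv ms a) = shiftEquiv s (Q a)) →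
    ∀ (Bs : AddSubgroup RR), Finite (RR ⧸ Bs) →
    (∀ b ∈ Bs, ∀ k, (d : ℤ) ∣ Q b k) → ∀ (a : RR) (k : ℤ), (d : ℤ) ∣ Q a k := by
  induction d using Nat.strong_induction_on with
  | _ d ih =>
    intro Q hadd ms s hs htw Bs hfin hQB a k
    rcases eq_or_ne d 1 with rfl | hd1
    · simp
    · obtain ⟨ℓ, hℓp, d', rfl⟩ : ∃ ℓ, ℓ.Prime ∧ ∃ d', d = ℓ * d' := by
        obtain ⟨ℓ, hℓp, hdvd⟩ := Nat.exists_prime_and_dvd hd1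
        exact ⟨ℓ, hℓp, hdvd⟩
      have hℓ0 : (ℓ : ℤ) ≠ 0 := by exact_mod_cast hℓp.ne_zero
      have hd'0 : d' ≠ 0 := by
        intro h
        rw [h, mul_zero] at hd0
        exact hd0 rfl
      have hstep : ∀ (a : RR) (k : ℤ), (ℓ : ℤ) ∣ Q a k := by
        refine step1 Q hadd ms s hs htw Bs hfin ℓ ?_
        intro b hb k
        exact dvd_trans ⟨(d' : ℤ), by push_cast; ring⟩ (hQB b hb k)
      set Q' : RR → RR := fun a => (Q a).mapRange (fun n : ℤ => n / (ℓ : ℤ)) (by simp)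
        with hQ'def
      have hQ'apply : ∀ (a : RR) (k : ℤ), (ℓ : ℤ) * Q' a k = Q a k := by
        intro a k
        show (ℓ : ℤ) * ((Q a).mapRange (fun n : ℤ => n / (ℓ : ℤ)) (by simp)) k = Q a k
        rw [Finsupp.mapRange_apply]
        exact Int.mul_ediv_cancel' (hstep a k)
      have hadd' : ∀ a b, Q' (a + b) = Q' a + Q' b := by
        intro a b
        ext k
        refine Int.eq_of_mul_eq_mul_left hℓ0 ?_
        rw [hQ'apply, hadd, Finsupp.add_apply, Finsupp.add_apply, mul_add,
          hQ'apply, hQ'apply]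
      have htw' : ∀ a, Q' (shiftEquiv ms a) = shiftEquiv s (Q' a) := by
        intro a
        ext k
        refine Int.eq_of_mul_eq_mul_left hℓ0 ?_
        rw [hQ'apply, htw, shiftEquiv_apply, shiftEquiv_apply, hQ'apply]
      have hQB' : ∀ b ∈ Bs, ∀ k, (d' : ℤ) ∣ Q' b k := by
        intro b hb k
        have h1 := hQB b hb k
        rw [← hQ'apply b k] at h1
        have hc : ((ℓ * d' : ℕ) : ℤ) = (ℓ : ℤ) * (d' : ℤ) := by push_cast; ring
        rw [hc] at h1
        exact (mul_dvd_mul_iff_left hℓ0).mp h1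
      have hlt : d' < ℓ * d' := by
        have h2 : 2 ≤ ℓ := hℓp.two_le
        have h3 : 2 * d' ≤ ℓ * d' := Nat.mul_le_mul_right d' h2
        omega
      have hres := ih d' hlt hd'0 Q' hadd' ms s hs htw' Bs hfin hQB' a k
      rw [← hQ'apply a k]
      have : ((ℓ * d' : ℕ) : ℤ) = (ℓ : ℤ) * (d' : ℤ) := by push_cast; ring
      rw [this]
      exact mul_dvd_mul_left _ hres

theorem int_ker_nontrivial {n : ℕ} (g : (Fin (n+1) → ℤ) →+ (Fin n → ℤ)) :
    ∃ c : Fin (n+1) → ℤ, c ≠ 0 ∧ g c = 0 := by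
  by_contra hcon
  push_neg at hcon
  have hinj : Function.Injective g.toIntLinearMap := by
    intro a b hab
    by_contra hne
    refine hcon (a - b) (sub_ne_zero.mpr hne) ?_
    have : g.toIntLinearMap (a - b) = 0 := by
      rw [map_sub, hab, sub_self]
    exact this
  have hle := LinearMap.finrank_le_finrank_of_injective hinj
  rw [Module.finrank_fin_fun, Module.finrank_fin_fun] at hle
  omega

theorem case2 (H : Subgroup GG) (f : H →* GG)
    (d m : ℕ) (hd0 : d ≠ 0) (hm0 : m ≠ 0)
    (hdH : ∀ w : RR, ι (ofAdd (d • w)) ∈ H)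
    (h₀ : GG) (hh₀H : h₀ ∈ H) (hπh₀ : rightHom h₀ = ofAdd (m : ℤ))
    (b₀ : RR) (hb₀ : ι (ofAdd b₀) ∈ H)
    (hb₀ne : rightHom (f ⟨ι (ofAdd b₀), hb₀⟩) ≠ 1) :
    ∃ K : Subgroup GG, K ≠ ⊥ ∧ K.Normal ∧ ∃ hK : K ≤ H,
      ∀ k (hk : k ∈ K), f ⟨k, hK hk⟩ ∈ K := by
  classical
  set φ : RR → ℤ := fun v =>
    if h : ι (ofAdd v) ∈ H then toAdd (rightHom (f ⟨ι (ofAdd v), h⟩)) else 0 with hφdef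
  have hφ : ∀ v (h : ι (ofAdd v) ∈ H), φ v = toAdd (rightHom (f ⟨ι (ofAdd v), h⟩)) := by
    intro v h
    simp only [hφdef, dif_pos h]
  have hφadd : ∀ v w, ι (ofAdd v) ∈ H → ι (ofAdd w) ∈ H → φ (v + w) = φ v + φ w := by
    intro v w hv hw
    have hvw : ι (ofAdd (v + w)) ∈ H := by
      rw [ofAdd_add, map_mul]; exact H.mul_mem hv hw
    rw [hφ _ hvw, hφ _ hv, hφ _ hw]
    have hmul : (⟨ι (ofAdd (v + w)), hvw⟩ : H) = ⟨ι (ofAdd v), hv⟩ * ⟨ι (ofAdd w), hw⟩ := by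
      apply Subtype.ext
      push_cast
      rw [ofAdd_add, map_mul]
    rw [hmul, map_mul, map_mul, toAdd_mul]
  have hφshift : ∀ v, ι (ofAdd v) ∈ H → φ (shiftEquiv (m : ℤ) v) = φ v := by
    intro v hv
    have hconj : ι (ofAdd (shiftEquiv (m : ℤ) v)) = h₀ * ι (ofAdd v) * h₀⁻¹ := by
      rw [conj_inl, hπh₀]; simp
    have hmemc : ι (ofAdd (shiftEquiv (m : ℤ) v)) ∈ H := by
      rw [hconj]; exact H.mul_mem (H.mul_mem hh₀H hv) (H.inv_mem hh₀H)
    rw [hφ _ hmemc, hφ _ hv]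
    have hmul : (⟨ι (ofAdd (shiftEquiv (m : ℤ) v)), hmemc⟩ : H) =
        ⟨h₀, hh₀H⟩ * ⟨ι (ofAdd v), hv⟩ * (⟨h₀, hh₀H⟩ : H)⁻¹ := by
      apply Subtype.ext
      push_cast
      exact hconj
    rw [hmul, map_mul, map_mul, map_inv]
    congr 1
    rw [map_mul, map_mul, map_inv]
    exact mul_inv_cancel_comm _ _
  have hshiftmem : ∀ (v : RR), (∃ w, v = d • w) → ∀ t : ℤ, ι (ofAdd (shiftEquiv t v)) ∈ H := by
    rintro v ⟨w, rfl⟩ t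
    rw [map_nsmul]
    exact hdH _
  have hdmemH : ∀ (v : RR), (∃ w, v = d • w) → ι (ofAdd v) ∈ H := by
    rintro v ⟨w, rfl⟩
    exact hdH w
  have hvanish : ∀ v (hv : ι (ofAdd v) ∈ H), φ v = 0 → f ⟨ι (ofAdd v), hv⟩ = 1 := by
    intro v hv h0
    set y := f ⟨ι (ofAdd v), hv⟩ with hy
    set z := f ⟨ι (ofAdd b₀), hb₀⟩ with hz
    have hyr : rightHom y = 1 := by
      rw [hφ v hv] at h0
      rw [← ofAdd_toAdd (rightHom y), show toAdd (rightHom y) = 0 from h0, ofAdd_zero]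
    have hcomm : y * z = z * y := by
      have hsw : (⟨ι (ofAdd v), hv⟩ * ⟨ι (ofAdd b₀), hb₀⟩ : H) =
          ⟨ι (ofAdd b₀), hb₀⟩ * ⟨ι (ofAdd v), hv⟩ := by
        apply Subtype.ext
        push_cast
        rw [← map_mul ι, ← map_mul ι, mul_comm]
      show f ⟨ι (ofAdd v), hv⟩ * f ⟨ι (ofAdd b₀), hb₀⟩ =
        f ⟨ι (ofAdd b₀), hb₀⟩ * f ⟨ι (ofAdd v), hv⟩
      rw [← map_mul, ← map_mul, hsw]
    have hyl : ι y.left = y := eq_inl_left hyr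
    have h1 : z * ι y.left * z⁻¹ = ι y.left := by
      rw [hyl, ← hcomm, mul_assoc, mul_inv_cancel, mul_one]
    have h2 := conj_inl z y.left
    have h3 : shiftEquiv (toAdd (rightHom z)) (toAdd y.left) = toAdd y.left := by
      have h4 := h1.symm.trans h2
      have h5 := inl_injective h4
      have := congrArg toAdd h5
      simpa using this.symm
    have htne : toAdd (rightHom z) ≠ 0 := by
      intro h
      exact hb₀ne (by rw [← ofAdd_toAdd (rightHom z), h, ofAdd_zero])
    have hy0 : toAdd y.left = 0 := shiftEquiv_eq_self h3 htne
    rw [← hyl, ← ofAdd_toAdd y.left, hy0, ofAdd_zero, map_one]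
  have hφ0 : φ (0 : RR) = 0 := by
    have h1 : ι (ofAdd (0 : RR)) ∈ H := by simpa using H.one_mem
    rw [hφ _ h1]
    have h2 : (⟨ι (ofAdd (0 : RR)), h1⟩ : H) = 1 := by
      apply Subtype.ext
      push_cast
      simp
    rw [h2, map_one, map_one]
    simp
  set W : AddSubgroup RR :=
    { carrier := {v | (∃ w, v = d • w) ∧ ∀ j : ℕ, j < m → φ (shiftEquiv (-(j : ℤ)) v) = 0},
      zero_mem' := by
        refine ⟨⟨0, by simp⟩, ?_⟩
        intro j hj
        rw [map_zero]
        exact hφ0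
      add_mem' := by
        rintro a b ⟨hda, hca⟩ ⟨hdb, hcb⟩
        refine ⟨?_, ?_⟩
        · obtain ⟨w, rfl⟩ := hda
          obtain ⟨w', rfl⟩ := hdb
          exact ⟨w + w', by rw [smul_add]⟩
        · intro j hj
          rw [map_add, hφadd _ _ (hshiftmem _ hda _) (hshiftmem _ hdb _), hca j hj, hcb j hj]
          simp
      neg_mem' := by
        rintro a ⟨hda, hca⟩
        refine ⟨?_, ?_⟩
        · obtain ⟨w, rfl⟩ := hda
          exact ⟨-w, by rw [smul_neg]⟩
        · intro j hj
          have hmem := hshiftmem _ hda (-(j : ℤ))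
          have hmemneg : ι (ofAdd (-(shiftEquiv (-(j : ℤ)) a))) ∈ H := by
            rw [ofAdd_neg, map_inv]
            exact H.inv_mem hmem
          have hsum := hφadd _ _ hmem hmemneg
          rw [add_neg_cancel, hφ0, hca j hj] at hsum
          rw [map_neg]
          omega } with hWdef
  have hWmem : ∀ v : RR, v ∈ W ↔
      ((∃ w, v = d • w) ∧ ∀ j : ℕ, j < m → φ (shiftEquiv (-(j : ℤ)) v) = 0) := fun v => Iff.rfl
  -- shift stability
  have hWshift1 : ∀ v ∈ W, shiftEquiv (1 : ℤ) v ∈ W := by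
    intro v hv
    obtain ⟨hd1, hcond⟩ := (hWmem v).mp hv
    refine (hWmem _).mpr ⟨?_, ?_⟩
    · obtain ⟨w, rfl⟩ := hd1
      exact ⟨shiftEquiv 1 w, by rw [map_nsmul]⟩
    · intro j hj
      rw [shiftEquiv_comp]
      rcases Nat.eq_zero_or_pos j with hj0 | hjpos
      · subst hj0
        have e1 : (-(0:ℕ) + 1 : ℤ) = (m : ℤ) + (1 - m) := by push_cast; ring
        rw [e1, ← shiftEquiv_comp]
        rw [hφshift _ (hshiftmem _ hd1 _)]
        have e2 : (1 - (m:ℤ)) = -(((m - 1 : ℕ)) : ℤ) := by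
          push_cast [Nat.cast_sub (Nat.one_le_iff_ne_zero.mpr hm0)]
          ring
        rw [e2]
        exact hcond (m - 1) (by omega)
      · have e1 : (-(j:ℤ) + 1) = -(((j - 1 : ℕ)) : ℤ) := by
          push_cast [Nat.cast_sub (Nat.one_le_iff_ne_zero.mpr (by omega : j ≠ 0))]
          ring
        rw [e1]
        exact hcond (j - 1) (by omega)
  have hWshiftn1 : ∀ v ∈ W, shiftEquiv (-1 : ℤ) v ∈ W := by
    intro v hv
    obtain ⟨hd1, hcond⟩ := (hWmem v).mp hv
    refine (hWmem _).mpr ⟨?_, ?_⟩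
    · obtain ⟨w, rfl⟩ := hd1
      exact ⟨shiftEquiv (-1) w, by rw [map_nsmul]⟩
    · intro j hj
      rw [shiftEquiv_comp]
      rcases Nat.lt_or_ge (j + 1) m with hlt | hge
      · have e1 : (-(j:ℤ) + -1) = -(((j + 1 : ℕ)) : ℤ) := by push_cast; ring
        rw [e1]
        exact hcond (j + 1) hlt
      · have hjm : j + 1 = m := by omega
        have e1 : (-(j:ℤ) + -1) = -(m:ℤ) := by
          have : ((j:ℤ)) = (m:ℤ) - 1 := by
            have := congrArg (fun x : ℕ => (x : ℤ)) hjm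
            push_cast at this
            omega
          omega
        rw [e1]
        have := hφshift (shiftEquiv (-(m:ℤ)) v) (hshiftmem _ hd1 _)
        rw [shiftEquiv_comp] at this
        have e2 : ((m:ℤ) + -(m:ℤ)) = -((0:ℕ) : ℤ) := by simp
        rw [e2] at this
        rw [← this]
        exact hcond 0 (by omega)
  have hWstab : ∀ (t : ℤ) v, v ∈ W → shiftEquiv t v ∈ W := by
    intro t
    induction t using Int.induction_on with
    | zero => intro v hv; rw [shiftEquiv_zero]; exact hv
    | succ k ih =>
        intro v hv
        have e : ((k : ℤ) + 1) = 1 + (k : ℤ) := by ring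
        rw [e, ← shiftEquiv_comp]
        exact hWshift1 _ (ih v hv)
    | pred k ih =>
        intro v hv
        have e : (-(k : ℤ) - 1) = -1 + (-(k:ℤ)) := by ring
        rw [e, ← shiftEquiv_comp]
        exact hWshiftn1 _ (ih v hv)
  -- nontriviality
  set T : (Fin (m + 1) → ℤ) → RR :=
    fun c => d • ∑ i' : Fin (m + 1), Finsupp.single ((i' : ℕ) : ℤ) (c i') with hTdef
  have hT : ∀ c : Fin (m + 1) → ℤ, ∀ i : Fin (m+1), (T c) ((i : ℕ) : ℤ) = d * c i := by
    intro c i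
    show ((d • ∑ i' : Fin (m + 1), Finsupp.single ((i' : ℕ) : ℤ) (c i') : RR) ((i : ℕ) : ℤ))
        = d * c i
    rw [Finsupp.smul_apply, Finsupp.finset_sum_apply]
    rw [Finset.sum_eq_single i]
    · rw [Finsupp.single_eq_same, nsmul_eq_mul]
    · intro b _ hbne
      exact Finsupp.single_eq_of_ne' (fun hcast => hbne (Fin.ext (by exact_mod_cast hcast)))
    · intro habs
      exact absurd (Finset.mem_univ i) habs
  have hTadd : ∀ c c', T (c + c') = T c + T c' := by
    intro c c'
    show (d • ∑ i' : Fin (m + 1), Finsupp.single ((i' : ℕ) : ℤ) ((c + c') i') : RR) =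
      (d • ∑ i' : Fin (m + 1), Finsupp.single ((i' : ℕ) : ℤ) (c i') : RR) +
      (d • ∑ i' : Fin (m + 1), Finsupp.single ((i' : ℕ) : ℤ) (c' i') : RR)
    simp only [Pi.add_apply, Finsupp.single_add, Finset.sum_add_distrib, smul_add]
  have hTd : ∀ c, ∃ w, T c = d • w := fun c => ⟨_, rfl⟩
  set Ψ : (Fin (m + 1) → ℤ) →+ (Fin m → ℤ) := AddMonoidHom.mk'
    (fun c => fun j : Fin m => φ (shiftEquiv (-((j : ℕ) : ℤ)) (T c))) (by
      intro c c'
      funext j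
      show φ (shiftEquiv (-((j : ℕ) : ℤ)) (T (c + c'))) =
        φ (shiftEquiv (-((j : ℕ) : ℤ)) (T c)) + φ (shiftEquiv (-((j : ℕ) : ℤ)) (T c'))
      rw [hTadd, map_add]
      exact hφadd _ _ (hshiftmem _ (hTd c) _) (hshiftmem _ (hTd c') _)) with hΨdef
  obtain ⟨c, hc0, hΨc⟩ := int_ker_nontrivial Ψ
  have hv₀W : T c ∈ W := by
    refine (hWmem _).mpr ⟨hTd c, ?_⟩
    intro j hj
    have := congrFun hΨc ⟨j, hj⟩
    exact this
  have hv₀ne : T c ≠ 0 := by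
    intro h0
    obtain ⟨i, hi⟩ := Function.ne_iff.mp hc0
    have h2 := hT c i
    rw [h0] at h2
    simp only [Finsupp.coe_zero, Pi.zero_apply] at h2
    rcases mul_eq_zero.mp h2.symm with h | h
    · exact hd0 (by exact_mod_cast h)
    · exact hi h
  -- conclude via build
  apply build H f W
  case hstab => exact hWstab
  case hne => exact ⟨T c, hv₀W, hv₀ne⟩
  case hle =>
    intro w hw
    exact hdmemH w ((hWmem w).mp hw).1
  case hf =>
    intro w hw
    obtain ⟨hwd, hwc⟩ := (hWmem w).mp hw
    have hmem : ι (ofAdd w) ∈ H := hdmemH w hwd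
    have hφw : φ w = 0 := by
      have := hwc 0 (by omega)
      rw [show (-((0:ℕ):ℤ)) = (0:ℤ) by simp, shiftEquiv_zero] at this
      exact this
    have h1 : f ⟨ι (ofAdd w), hmem⟩ = 1 := hvanish w hmem hφw
    suffices hfin : f ⟨ι (ofAdd w), hmem⟩ ∈ mkK W from hfin
    rw [h1]
    exact (mkK W).one_mem

theorem case1a (H : Subgroup GG) (f : H →* GG)
    (d m : ℕ) (hd0 : d ≠ 0) (hm0 : m ≠ 0)
    (hdH : ∀ w : RR, ι (ofAdd (d • w)) ∈ H)
    (h₀ : GG) (hh₀H : h₀ ∈ H) (hπh₀ : rightHom h₀ = ofAdd (m : ℤ))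
    (hc : ∀ (b : RR) (hb : ι (ofAdd b) ∈ H), rightHom (f ⟨ι (ofAdd b), hb⟩) = 1)
    (hs : rightHom (f ⟨h₀, hh₀H⟩) = 1) :
    ∃ K : Subgroup GG, K ≠ ⊥ ∧ K.Normal ∧ ∃ hK : K ≤ H,
      ∀ k (hk : k ∈ K), f ⟨k, hK hk⟩ ∈ K := by
  classical
  set θ : RR →+ RR := AddMonoidHom.mk' (fun a => shiftEquiv (m : ℤ) (d • a) - d • a) (by
    intro a b
    simp only [smul_add, map_add]
    abel) with hθdef
  have hθ : ∀ a : RR, θ a = shiftEquiv (m : ℤ) (d • a) - d • a := fun a => rfl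
  have hconj : ∀ a : RR, ι (ofAdd (shiftEquiv (m : ℤ) a)) = h₀ * ι (ofAdd a) * h₀⁻¹ := by
    intro a
    rw [conj_inl, hπh₀]
    simp
  have hXsplit : ∀ a : RR, ι (ofAdd (θ a)) =
      (h₀ * ι (ofAdd (d • a)) * h₀⁻¹) * (ι (ofAdd (d • a)))⁻¹ := by
    intro a
    rw [hθ, sub_eq_add_neg, ofAdd_add, map_mul, ofAdd_neg, map_inv, hconj]
  apply build H f θ.range
  case hstab =>
    rintro t w ⟨a, rfl⟩
    refine ⟨shiftEquiv t a, ?_⟩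
    rw [hθ, hθ, ← map_nsmul (shiftEquiv t) d a]
    rw [map_sub]
    rw [shiftEquiv_comp, shiftEquiv_comp, add_comm]
  case hne =>
    refine ⟨θ (Finsupp.single 0 1), ⟨_, rfl⟩, ?_⟩
    intro h0
    have hne : ¬((0 : ℤ) = (m : ℤ)) := by
      intro h
      exact hm0 (by exact_mod_cast h.symm)
    have h1 := congrArg (fun v : RR => v (m : ℤ)) h0
    simp only [hθ, Finsupp.sub_apply, Finsupp.smul_apply, Finsupp.coe_zero, Pi.zero_apply,
      shiftEquiv_apply, Finsupp.single_apply, sub_self, if_pos rfl, if_neg hne, smul_eq_mul,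
      mul_one, mul_zero, sub_zero] at h1
    simp only [if_pos trivial, smul_zero, sub_zero, Int.cast_one, smul_eq_mul, mul_one] at h1
    rw [nsmul_eq_mul, mul_one] at h1
    exact hd0 (by exact_mod_cast h1)
  case hle =>
    rintro w ⟨a, rfl⟩
    rw [hXsplit a]
    exact H.mul_mem (H.mul_mem (H.mul_mem hh₀H (hdH a)) (H.inv_mem hh₀H)) (H.inv_mem (hdH a))
  case hf =>
    intro w hw
    obtain ⟨a, rfl⟩ := hw
    have hXH : ι (ofAdd (d • a)) ∈ H := hdH a
    have hmem : ι (ofAdd (θ a)) ∈ H := by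
      rw [hXsplit a]
      exact H.mul_mem (H.mul_mem (H.mul_mem hh₀H (hdH a)) (H.inv_mem hh₀H)) (H.inv_mem (hdH a))
    have hsub : (⟨ι (ofAdd (θ a)), hmem⟩ : H) =
        ⟨h₀, hh₀H⟩ * ⟨ι (ofAdd (d • a)), hXH⟩ * (⟨h₀, hh₀H⟩ : H)⁻¹ *
          (⟨ι (ofAdd (d • a)), hXH⟩ : H)⁻¹ := by
      apply Subtype.ext
      push_cast
      exact hXsplit a
    have hone : f ⟨ι (ofAdd (θ a)), hmem⟩ = 1 := by
      rw [hsub, map_mul, map_mul, map_mul, map_inv, map_inv,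
        inl_comm hs (hc _ hXH), mul_assoc (f ⟨ι (ofAdd (d • a)), hXH⟩), mul_inv_cancel, mul_one,
        mul_inv_cancel]
    suffices hfin : f ⟨ι (ofAdd (θ a)), hmem⟩ ∈ mkK θ.range from hfin
    rw [hone]
    exact (mkK _).one_mem

theorem case1b (H : Subgroup GG) (hH : H.FiniteIndex) (f : H →* GG)
    (d m : ℕ) (hd0 : d ≠ 0) (hm0 : m ≠ 0)
    (hdH : ∀ w : RR, ι (ofAdd (d • w)) ∈ H)
    (h₀ : GG) (hh₀H : h₀ ∈ H) (hπh₀ : rightHom h₀ = ofAdd (m : ℤ))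
    (hc : ∀ (b : RR) (hb : ι (ofAdd b) ∈ H), rightHom (f ⟨ι (ofAdd b), hb⟩) = 1)
    (hs : rightHom (f ⟨h₀, hh₀H⟩) ≠ 1) :
    ∃ K : Subgroup GG, K ≠ ⊥ ∧ K.Normal ∧ ∃ hK : K ≤ H,
      ∀ k (hk : k ∈ K), f ⟨k, hK hk⟩ ∈ K := by
  classical
  have hs0 : toAdd (rightHom (f ⟨h₀, hh₀H⟩)) ≠ 0 := by
    intro h
    exact hs (by rw [← ofAdd_toAdd (rightHom (f ⟨h₀, hh₀H⟩)), h, ofAdd_zero])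
  set Q : RR → RR := fun w => toAdd ((f ⟨ι (ofAdd (d • w)), hdH w⟩).left) with hQdef
  have hQspec : ∀ w, f ⟨ι (ofAdd (d • w)), hdH w⟩ = ι (ofAdd (Q w)) := by
    intro w
    have h1 : rightHom (f ⟨ι (ofAdd (d • w)), hdH w⟩) = 1 := hc _ (hdH w)
    have h2 := eq_inl_left h1
    show f ⟨ι (ofAdd (d • w)), hdH w⟩ = ι (ofAdd (toAdd ((f ⟨ι (ofAdd (d • w)), hdH w⟩).left)))
    rw [ofAdd_toAdd]
    exact h2.symm
  have hQadd : ∀ a b, Q (a + b) = Q a + Q b := by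
    intro a b
    have h1 : (⟨ι (ofAdd (d • (a + b))), hdH _⟩ : H) =
        ⟨ι (ofAdd (d • a)), hdH a⟩ * ⟨ι (ofAdd (d • b)), hdH b⟩ := by
      apply Subtype.ext
      push_cast
      rw [smul_add, ofAdd_add, map_mul]
    have h2 := hQspec (a + b)
    rw [h1, map_mul, hQspec a, hQspec b, ← map_mul, ← ofAdd_add] at h2
    have h3 := inl_injective h2
    have h4 := congrArg toAdd h3
    simpa using h4.symm
  have hQtw : ∀ a, Q (shiftEquiv (m : ℤ) a) =
      shiftEquiv (toAdd (rightHom (f ⟨h₀, hh₀H⟩))) (Q a) := by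
    intro a
    have hdc : (d • shiftEquiv (m : ℤ) a : RR) = shiftEquiv (m : ℤ) (d • a) :=
      (map_nsmul (shiftEquiv (m : ℤ)) d a).symm
    have hconj : ι (ofAdd (shiftEquiv (m : ℤ) (d • a))) = h₀ * ι (ofAdd (d • a)) * h₀⁻¹ := by
      rw [conj_inl, hπh₀]
      simp
    have h1 : (⟨ι (ofAdd (d • shiftEquiv (m : ℤ) a)), hdH _⟩ : H) =
        ⟨h₀, hh₀H⟩ * ⟨ι (ofAdd (d • a)), hdH a⟩ * (⟨h₀, hh₀H⟩ : H)⁻¹ := by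
      apply Subtype.ext
      push_cast
      rw [hdc]
      exact hconj
    have h2 := hQspec (shiftEquiv (m : ℤ) a)
    rw [h1, map_mul, map_mul, map_inv, hQspec a, conj_inl] at h2
    have h3 := inl_injective h2
    have h4 := congrArg toAdd h3
    simpa using h4.symm
  have hQB : ∀ b ∈ BsOf H, ∀ k : ℤ, (d : ℤ) ∣ Q b k := by
    intro b hb k
    have hbH : ι (ofAdd b) ∈ H := hb
    have h1 : (⟨ι (ofAdd (d • b)), hdH b⟩ : H) = (⟨ι (ofAdd b), hbH⟩ : H) ^ d := by
      apply Subtype.ext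
      push_cast
      rw [ofAdd_nsmul, map_pow]
    have h3 : f ⟨ι (ofAdd b), hbH⟩ =
        ι (ofAdd (toAdd ((f ⟨ι (ofAdd b), hbH⟩).left))) := by
      rw [ofAdd_toAdd]
      exact (eq_inl_left (hc b hbH)).symm
    have h2 := hQspec b
    rw [h1, map_pow, h3, ← map_pow, ← ofAdd_nsmul] at h2
    have h4 := congrArg toAdd (inl_injective h2)
    simp only [toAdd_ofAdd] at h4
    have h5 := congrArg (fun v : RR => v k) h4
    rw [nsmul_apply'] at h5
    exact ⟨_, by rw [← h5]; push_cast; rw [nsmul_eq_mul]⟩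
  have hdvd : ∀ (a : RR) (k : ℤ), (d : ℤ) ∣ Q a k :=
    keyB d hd0 Q hQadd (m : ℤ) (toAdd (rightHom (f ⟨h₀, hh₀H⟩))) hs0 hQtw (BsOf H)
      (finite_BsOf H hH) hQB
  set W : AddSubgroup RR :=
    { carrier := {v | ∃ w, v = d • w}
      zero_mem' := ⟨0, by simp⟩
      add_mem' := by
        rintro a b ⟨w, rfl⟩ ⟨w', rfl⟩
        exact ⟨w + w', by rw [smul_add]⟩
      neg_mem' := by
        rintro a ⟨w, rfl⟩
        exact ⟨-w, by rw [smul_neg]⟩ } with hWdef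
  have hWmem : ∀ v : RR, v ∈ W ↔ ∃ w, v = d • w := fun v => Iff.rfl
  have hQW : ∀ a : RR, Q a ∈ W := by
    intro a
    refine (hWmem _).mpr ⟨(Q a).mapRange (fun n : ℤ => n / (d : ℤ)) (by simp), ?_⟩
    ext k
    rw [nsmul_apply', Finsupp.mapRange_apply, nsmul_eq_mul]
    exact (Int.mul_ediv_cancel' (hdvd a k)).symm
  apply build H f W
  case hstab =>
    rintro t w ⟨a, rfl⟩
    exact ⟨shiftEquiv t a, by rw [map_nsmul]⟩
  case hne =>
    refine ⟨d • Finsupp.single 0 1, ⟨_, rfl⟩, ?_⟩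
    intro h0
    have h1 := congrArg (fun v : RR => v 0) h0
    simp only [Finsupp.coe_zero, Pi.zero_apply] at h1
    rw [nsmul_apply', Finsupp.single_eq_same, nsmul_eq_mul, mul_one] at h1
    exact hd0 (by exact_mod_cast h1)
  case hle =>
    rintro w ⟨a, rfl⟩
    exact hdH a
  case hf =>
    intro w hw
    obtain ⟨a, rfl⟩ := hw
    suffices hfin2 : f ⟨ι (ofAdd (d • a)), hdH a⟩ ∈ mkK W from hfin2
    rw [hQspec a]
    exact mem_mkK.mpr ⟨Q a, hQW a, rfl⟩

end Stmt11

/-- `ℤ wr ℤ` is not self-similar: for every finite-index subgroup `H` and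
homomorphism `f : H → ℤ wr ℤ`, some nontrivial subgroup `K ≤ H` normal in `ℤ wr ℤ` is
`f`-invariant. -/
theorem stmt11 (H : Subgroup (Wreath ℤ ℤ)) (hH : H.FiniteIndex) (f : H →* Wreath ℤ ℤ) :
    ∃ K : Subgroup (Wreath ℤ ℤ), K ≠ ⊥ ∧ K.Normal ∧ ∃ hK : K ≤ H,
      ∀ k (hk : k ∈ K), f ⟨k, hK hk⟩ ∈ K := by
  classical
  haveI := hH
  obtain ⟨h₀, hh₀H, m, hm0, hπh₀⟩ := Stmt11.exists_h0 H hH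
  have hd0 : (H.normalCore.index) ≠ 0 := Subgroup.FiniteIndex.index_ne_zero
  have hdH : ∀ w : Stmt11.RR, Stmt11.ι (Multiplicative.ofAdd (H.normalCore.index • w)) ∈ H := by
    intro w
    rw [ofAdd_nsmul, map_pow]
    exact H.normalCore_le (Subgroup.pow_index_mem H.normalCore _)
  by_cases hc : ∀ (b : Stmt11.RR) (hb : Stmt11.ι (Multiplicative.ofAdd b) ∈ H),
      SemidirectProduct.rightHom (f ⟨Stmt11.ι (Multiplicative.ofAdd b), hb⟩) = 1
  · by_cases hs : SemidirectProduct.rightHom (f ⟨h₀, hh₀H⟩) = 1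
    · exact Stmt11.case1a H f _ m hd0 hm0 hdH h₀ hh₀H hπh₀ hc hs
    · exact Stmt11.case1b H hH f _ m hd0 hm0 hdH h₀ hh₀H hπh₀ hc hs
  · push_neg at hc
    obtain ⟨b₀, hb₀, hb₀ne⟩ := hc
    exact Stmt11.case2 H f _ m hd0 hm0 hdH h₀ hh₀H hπh₀ b₀ hb₀ hb₀ne
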